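/- Suppose argmax_i μ̲_i = {i*}. A feasible incentive-compatible mechanism (p, q) is optimal in the distributionally robust problem over the Markov ambiguity set if and only if ∑_i (p_i(t)·t_i − q_i(t)·c_i) ≥ t_{i*} for every scenario t ∈ 𝒯. -/

import Mathlib

open MeasureTheory

/-- The type space: every coordinate lies in `[tlo i, thi i]`. -/
def InT {ι : Type*} (tlo thi : ι → ℝ) (t : ι → ℝ) : Prop :=
  ∀ i, t i ∈ Set.Icc (tlo i) (thi i)

/-- Membership in the Markov ambiguity set: a probability distribution supported on the
type space whose marginal means lie in `[mlo i, mhi i]`. -/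
def InP {ι : Type*} [Fintype ι] (tlo thi mlo mhi : ι → ℝ) (P : Measure (ι → ℝ)) : Prop :=
  IsProbabilityMeasure P ∧ (∀ᵐ t ∂P, InT tlo thi t) ∧
    ∀ i, ∫ t, t i ∂P ∈ Set.Icc (mlo i) (mhi i)

/-- The principal's payoff in scenario `t`. -/
def Pay {ι : Type*} [Fintype ι] (c : ι → ℝ) (p q : (ι → ℝ) → ι → ℝ) (t : ι → ℝ) : ℝ :=
  ∑ i, (p t i * t i - q t i * c i)

/-- Feasibility: values in `[0,1]`, `q ≤ p`, and total allocation at most one, on the type space. -/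
def Feas {ι : Type*} [Fintype ι] (tlo thi : ι → ℝ) (p q : (ι → ℝ) → ι → ℝ) : Prop :=
  ∀ t, InT tlo thi t →
    (∀ i, 0 ≤ q t i ∧ q t i ≤ p t i ∧ p t i ≤ 1) ∧ ∑ i, p t i ≤ 1

/-- Incentive compatibility: no agent gains by misreporting his type. -/
def IC {ι : Type*} [DecidableEq ι] (tlo thi : ι → ℝ) (p q : (ι → ℝ) → ι → ℝ) : Prop :=
  ∀ i, ∀ t, InT tlo thi t → ∀ s ∈ Set.Icc (tlo i) (thi i),
    p (Function.update t i s) i - q (Function.update t i s) i ≤ p t i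

section AuxLems

set_option linter.unusedSectionVars false

variable {ι : Type*} [Fintype ι]

lemma inT_measurable (tlo thi : ι → ℝ) : MeasurableSet {t : ι → ℝ | InT tlo thi t} := by
  have : {t : ι → ℝ | InT tlo thi t} = Set.pi Set.univ (fun i => Set.Icc (tlo i) (thi i)) := by
    ext t; simp only [Set.mem_setOf_eq, Set.mem_univ_pi, InT]
  rw [this]
  exact MeasurableSet.univ_pi (fun i => measurableSet_Icc)

lemma pay_meas (c : ι → ℝ) (p q : (ι → ℝ) → ι → ℝ)
    (hpm : ∀ i, Measurable fun t => p t i) (hqm : ∀ i, Measurable fun t => q t i) :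
    Measurable (Pay c p q) := by
  unfold Pay
  exact Finset.measurable_sum _ fun i _ =>
    ((hpm i).mul (measurable_pi_apply i)).sub ((hqm i).mul_const (c i))

lemma pay_upper {tlo thi c : ι → ℝ} {p q : (ι → ℝ) → ι → ℝ}
    (hfeas : Feas tlo thi p q) (hc : ∀ i, 0 < c i) {t : ι → ℝ} (ht : InT tlo thi t)
    {b : ℝ} (hb : ∀ i, t i ≤ b) (hb0 : 0 ≤ b) : Pay c p q t ≤ b := by
  obtain ⟨hbox, hsum⟩ := hfeas t ht
  calc Pay c p q t ≤ ∑ i, p t i * b := by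
        apply Finset.sum_le_sum
        intro i _
        obtain ⟨hq0, hqp, hp1⟩ := hbox i
        have := (hc i).le
        have := hb i
        nlinarith
    _ = (∑ i, p t i) * b := by rw [Finset.sum_mul]
    _ ≤ 1 * b := mul_le_mul_of_nonneg_right hsum hb0
    _ = b := one_mul b

lemma pay_abs {tlo thi c : ι → ℝ} {p q : (ι → ℝ) → ι → ℝ}
    (hfeas : Feas tlo thi p q) (h0 : ∀ i, 0 ≤ tlo i) (hc : ∀ i, 0 < c i)
    {t : ι → ℝ} (ht : InT tlo thi t) :
    |Pay c p q t| ≤ ∑ i, (thi i + c i) := by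
  calc |Pay c p q t| ≤ ∑ i, |p t i * t i - q t i * c i| := Finset.abs_sum_le_sum_abs _ _
    _ ≤ ∑ i, (thi i + c i) := by
        apply Finset.sum_le_sum
        intro i _
        obtain ⟨hq0, hqp, hp1⟩ := (hfeas t ht).1 i
        obtain ⟨htl, hth⟩ := ht i
        have h0i := h0 i
        have hci := (hc i).le
        rw [abs_le]
        constructor <;> nlinarith

lemma integrable_of_bdd {P : Measure (ι → ℝ)} [IsProbabilityMeasure P]
    {S : (ι → ℝ) → Prop} (hS : ∀ᵐ t ∂P, S t)
    {f : (ι → ℝ) → ℝ} (hf : Measurable f) {M : ℝ}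
    (hb : ∀ t, S t → |f t| ≤ M) : Integrable f P := by
  refine (integrable_const M).mono' hf.aestronglyMeasurable ?_
  filter_upwards [hS] with t ht
  simpa [Real.norm_eq_abs] using hb t ht

lemma integrable_dirac' (a : ι → ℝ) {f : (ι → ℝ) → ℝ} (hf : Measurable f) :
    Integrable f (Measure.dirac a) :=
  (integrable_const (f a)).congr (ae_eq_dirac' hf).symm

lemma twopoint_integral (a b : ι → ℝ) {r : ℝ} (h0 : 0 ≤ r) (h1 : r ≤ 1)
    {f : (ι → ℝ) → ℝ} (hf : Measurable f) :
    ∫ t, f t ∂((ENNReal.ofReal r) • Measure.dirac a + (ENNReal.ofReal (1 - r)) • Measure.dirac b)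
      = r * f a + (1 - r) * f b := by
  rw [integral_add_measure
      ((integrable_dirac' a hf).smul_measure ENNReal.ofReal_ne_top)
      ((integrable_dirac' b hf).smul_measure ENNReal.ofReal_ne_top),
    integral_smul_measure, integral_smul_measure,
    integral_dirac' f a hf.stronglyMeasurable, integral_dirac' f b hf.stronglyMeasurable,
    ENNReal.toReal_ofReal h0, ENNReal.toReal_ofReal (by linarith : (0:ℝ) ≤ 1 - r)]
  simp [smul_eq_mul]

lemma twopoint_prob (a b : ι → ℝ) {r : ℝ} (h0 : 0 ≤ r) (h1 : r ≤ 1) :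
    IsProbabilityMeasure
      ((ENNReal.ofReal r) • Measure.dirac a + (ENNReal.ofReal (1 - r)) • Measure.dirac b) := by
  constructor
  rw [Measure.add_apply, Measure.smul_apply, Measure.smul_apply]
  simp only [Measure.dirac_apply_of_mem (Set.mem_univ a),
    Measure.dirac_apply_of_mem (Set.mem_univ b), smul_eq_mul, mul_one]
  rw [← ENNReal.ofReal_add h0 (by linarith)]
  norm_num

lemma twopoint_ae (a b : ι → ℝ) {r : ℝ} {S : (ι → ℝ) → Prop}
    (hSm : MeasurableSet {t | S t}) (ha : S a) (hb : S b) :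
    ∀ᵐ t ∂((ENNReal.ofReal r) • Measure.dirac a + (ENNReal.ofReal (1 - r)) • Measure.dirac b),
      S t := by
  rw [ae_iff]
  have hms : MeasurableSet {t : ι → ℝ | ¬ S t} := hSm.compl
  rw [Measure.add_apply, Measure.smul_apply, Measure.smul_apply,
    Measure.dirac_apply' _ hms, Measure.dirac_apply' _ hms]
  simp [Set.indicator_of_notMem, ha, hb]

end AuxLems

/-- Suppose `argmax_i μ̲_i = {i*}`. A feasible incentive-compatible
mechanism is optimal in the distributionally robust problem over the Markov ambiguity set
(i.e., its worst-case expected payoff equals the optimal value `μ̲_{i*}`) if and only if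
its payoff is at least `t_{i*}` in every scenario `t ∈ 𝒯`. -/
theorem stmt_13 {ι : Type*} [Fintype ι] [Nonempty ι] [DecidableEq ι]
    (tlo thi mlo mhi c : ι → ℝ)
    (h0 : ∀ i, 0 ≤ tlo i) (h1 : ∀ i, tlo i < mlo i) (h2 : ∀ i, mlo i ≤ mhi i)
    (h3 : ∀ i, mhi i < thi i) (hc : ∀ i, 0 < c i)
    (istar : ι) (hstar : ∀ i, i ≠ istar → mlo i < mlo istar)
    (p q : (ι → ℝ) → ι → ℝ)
    (hpm : ∀ i, Measurable fun t => p t i) (hqm : ∀ i, Measurable fun t => q t i)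
    (hfeas : Feas tlo thi p q) (hic : IC tlo thi p q) :
    sInf {x : ℝ | ∃ P : Measure (ι → ℝ), InP tlo thi mlo mhi P ∧
        x = ∫ t, Pay c p q t ∂P} = mlo istar ↔
      ∀ t, InT tlo thi t → t istar ≤ Pay c p q t := by
  classical
  set S : Set ℝ := {x : ℝ | ∃ P : Measure (ι → ℝ), InP tlo thi mlo mhi P ∧
      x = ∫ t, Pay c p q t ∂P} with hSdef
  set M : ℝ := ∑ i, (thi i + c i) with hMdef
  have hPaym : Measurable (Pay c p q) := pay_meas c p q hpm hqm
  have hTm := inT_measurable tlo thi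
  have hthipos : ∀ i, 0 < thi i := fun i =>
    lt_of_le_of_lt (h0 i) (by linarith [h1 i, h2 i, h3 i])
  -- lower bound on elements of S
  have hlbS : ∀ x ∈ S, -M ≤ x := by
    rintro x ⟨P, ⟨hP1, hP2, hP3⟩, rfl⟩
    haveI := hP1
    have hint : Integrable (Pay c p q) P :=
      integrable_of_bdd hP2 hPaym (fun t ht => pay_abs hfeas h0 hc ht)
    have hmono : ∫ _t, (-M) ∂P ≤ ∫ t, Pay c p q t ∂P := by
      apply integral_mono_ae (integrable_const _) hint
      filter_upwards [hP2] with t ht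
      have := (abs_le.mp (pay_abs hfeas h0 hc ht)).1
      simpa [hMdef] using this
    simpa using hmono
  have hbdd : BddBelow S := ⟨-M, fun x hx => hlbS x hx⟩
  -- the point t* = mlo belongs to the type space
  have htstar : InT tlo thi mlo := fun i => ⟨(h1 i).le, by linarith [h2 i, h3 i]⟩
  have hmb : ∀ i, mlo i ≤ mlo istar := by
    intro i
    by_cases hi : i = istar
    · subst hi; exact le_rfl
    · exact (hstar i hi).le
  have h0star : (0:ℝ) ≤ mlo istar := le_trans (h0 istar) (h1 istar).le
  have hdiracP : InP tlo thi mlo mhi (Measure.dirac mlo) := by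
    refine ⟨Measure.dirac.isProbabilityMeasure, (ae_dirac_iff hTm).mpr htstar, fun i => ?_⟩
    have : ∫ t, t i ∂(Measure.dirac mlo) = mlo i :=
      integral_dirac' (fun t : ι → ℝ => t i) mlo (measurable_pi_apply i).stronglyMeasurable
    rw [this]
    exact ⟨le_rfl, h2 i⟩
  have hpaydirac : ∫ t, Pay c p q t ∂(Measure.dirac mlo) = Pay c p q mlo :=
    integral_dirac' _ _ hPaym.stronglyMeasurable
  have hPaystar_le : Pay c p q mlo ≤ mlo istar := pay_upper hfeas hc htstar hmb h0star
  constructor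
  · -- only if: optimality implies pointwise domination
    intro hopt t₀ ht₀
    by_contra hlt
    push_neg at hlt
    -- choose a small mixing weight r
    set ε : ι → ℝ := fun i => min (mlo i - tlo i) (thi i - mlo i) with hεdef
    have hεpos : ∀ i, 0 < ε i := fun i =>
      lt_min (by linarith [h1 i]) (by linarith [h2 i, h3 i])
    set g : ι → ℝ := fun i =>
      min (ε i / (2 * thi i)) (if i = istar then 1 else (mlo istar - mlo i) / thi istar)
        with hgdef
    have hgpos : ∀ i, 0 < g i := by
      intro i
      refine lt_min (div_pos (hεpos i) (by linarith [hthipos i])) ?_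
      by_cases hi : i = istar
      · simp [hi]
      · rw [if_neg hi]
        exact div_pos (by linarith [hstar i hi]) (hthipos istar)
    set r : ℝ := min (1/2) (Finset.univ.inf' Finset.univ_nonempty g) with hrdef
    have hrpos : 0 < r :=
      lt_min (by norm_num) ((Finset.lt_inf'_iff _).mpr fun i _ => hgpos i)
    have hrhalf : r ≤ 1/2 := min_le_left _ _
    have hrg : ∀ i, r ≤ g i := fun i =>
      le_trans (min_le_right _ _) (Finset.inf'_le _ (Finset.mem_univ i))
    have hr1 : r < 1 := by linarith
    have h1r : 0 < 1 - r := by linarith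
    -- the companion point s
    set s : ι → ℝ := fun i => (mlo i - r * t₀ i) / (1 - r) with hsdef
    have hε1 : ∀ i, r * (2 * thi i) ≤ ε i := by
      intro i
      have := le_trans (hrg i) (min_le_left _ _)
      exact (le_div_iff₀ (by linarith [hthipos i])).mp this
    have hsInT : InT tlo thi s := by
      intro i
      obtain ⟨hl, hh⟩ := ht₀ i
      have hεl : ε i ≤ mlo i - tlo i := min_le_left _ _
      have hεh : ε i ≤ thi i - mlo i := min_le_right _ _
      have ht0nn : 0 ≤ t₀ i := le_trans (h0 i) hl
      have hrt0 : 0 ≤ r * t₀ i := mul_nonneg hrpos.le ht0nn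
      have hrthi : r * t₀ i ≤ r * thi i := mul_le_mul_of_nonneg_left hh hrpos.le
      have hrtlo : r * tlo i ≤ r * t₀ i := mul_le_mul_of_nonneg_left hl hrpos.le
      have hrtlonn : 0 ≤ r * tlo i := mul_nonneg hrpos.le (h0 i)
      constructor
      · rw [hsdef, le_div_iff₀ h1r]
        nlinarith [hε1 i, hthipos i]
      · rw [hsdef, div_le_iff₀ h1r]
        nlinarith [hε1 i, hthipos i]
    have hsmax : ∀ j, s j ≤ s istar := by
      intro j
      by_cases hj : j = istar
      · subst hj; exact le_rfl
      · have hgj : r ≤ (mlo istar - mlo j) / thi istar := by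
          have := le_trans (hrg j) (min_le_right _ _)
          rwa [if_neg hj] at this
        have hgap : r * thi istar ≤ mlo istar - mlo j :=
          (le_div_iff₀ (hthipos istar)).mp hgj
        have ht0j : 0 ≤ t₀ j := le_trans (h0 j) (ht₀ j).1
        have hrt0j : 0 ≤ r * t₀ j := mul_nonneg hrpos.le ht0j
        have hrti : r * t₀ istar ≤ r * thi istar :=
          mul_le_mul_of_nonneg_left (ht₀ istar).2 hrpos.le
        rw [hsdef, div_le_div_iff₀ h1r h1r]
        nlinarith [h1r]
    have hs0 : (0:ℝ) ≤ s istar := le_trans (h0 istar) (hsInT istar).1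
    have hmean : ∀ i, r * t₀ i + (1 - r) * s i = mlo i := by
      intro i
      rw [hsdef]
      field_simp
      ring
    set P : Measure (ι → ℝ) :=
      (ENNReal.ofReal r) • Measure.dirac t₀ + (ENNReal.ofReal (1 - r)) • Measure.dirac s
        with hPdef
    have hProb : IsProbabilityMeasure P := twopoint_prob t₀ s hrpos.le hr1.le
    have hInP : InP tlo thi mlo mhi P := by
      refine ⟨hProb, twopoint_ae t₀ s hTm ht₀ hsInT, fun i => ?_⟩
      have : ∫ t, t i ∂P = r * t₀ i + (1 - r) * s i :=
        twopoint_integral t₀ s hrpos.le hr1.le (measurable_pi_apply i)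
      rw [this, hmean i]
      exact ⟨le_rfl, h2 i⟩
    have hval : ∫ t, Pay c p q t ∂P = r * Pay c p q t₀ + (1 - r) * Pay c p q s :=
      twopoint_integral t₀ s hrpos.le hr1.le hPaym
    have hPays : Pay c p q s ≤ s istar := pay_upper hfeas hc hsInT hsmax hs0
    have hxS : (∫ t, Pay c p q t ∂P) ∈ S := ⟨P, hInP, rfl⟩
    have hle : sInf S ≤ ∫ t, Pay c p q t ∂P := csInf_le hbdd hxS
    have hless : ∫ t, Pay c p q t ∂P < mlo istar := by
      rw [hval]
      have hm := hmean istar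
      have h1' : (1 - r) * Pay c p q s ≤ (1 - r) * s istar :=
        mul_le_mul_of_nonneg_left hPays h1r.le
      have h2' : r * Pay c p q t₀ < r * t₀ istar :=
        mul_lt_mul_of_pos_left hlt hrpos
      linarith
    rw [hopt] at hle
    linarith
  · -- if: pointwise domination implies optimality
    intro hpt
    have hPaystar_ge : mlo istar ≤ Pay c p q mlo := hpt mlo htstar
    have hmem : mlo istar ∈ S := by
      refine ⟨Measure.dirac mlo, hdiracP, ?_⟩
      rw [hpaydirac]
      linarith
    apply le_antisymm (csInf_le hbdd hmem)
    apply le_csInf ⟨_, hmem⟩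
    rintro x ⟨P, ⟨hP1, hP2, hP3⟩, rfl⟩
    haveI := hP1
    have hint1 : Integrable (Pay c p q) P :=
      integrable_of_bdd hP2 hPaym (fun t ht => pay_abs hfeas h0 hc ht)
    have hint2 : Integrable (fun t => t istar) P := by
      refine integrable_of_bdd hP2 (measurable_pi_apply istar) (M := thi istar) ?_
      intro t ht
      obtain ⟨hl, hh⟩ := ht istar
      rw [abs_le]
      constructor <;> [linarith [h0 istar, hthipos istar]; linarith]
    have hmono : ∫ t, t istar ∂P ≤ ∫ t, Pay c p q t ∂P := by
      apply integral_mono_ae hint2 hint1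
      filter_upwards [hP2] with t ht using hpt t ht
    linarith [(hP3 istar).1]
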